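/- The mapping d(x,t) is continuously differentiable on ℝ^n × [0,1]; in particular, at each connection point t_ℓ (ℓ = 1, …, L−1) the partial derivative of d with respect to t exists, is continuous, and equals 0. -/

import Mathlib

open Real Set RealInnerProductSpace Topology Filter

/-! ### Auxiliary lemmas -/

noncomputable def gFun (α β u : ℝ) : ℝ := Real.cos (π/2 * ((u - β)/(α - β))) ^ 2

noncomputable def dgFun (α β u : ℝ) : ℝ :=
  (2:ℝ) * Real.cos (π/2 * ((u - β)/(α - β))) ^ 1 *
    (-Real.sin (π/2 * ((u - β)/(α - β))) * (π/2 * (1/(α - β))))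

lemma hasDerivAt_gFun (α β u : ℝ) : HasDerivAt (gFun α β) (dgFun α β u) u := by
  have h1 : HasDerivAt (fun u : ℝ => π/2 * ((u - β)/(α - β))) (π/2 * (1/(α-β))) u := by
    have := (((hasDerivAt_id u).sub_const β).div_const (α - β)).const_mul (π/2)
    simpa [one_div] using this
  have h2 := (Real.hasDerivAt_cos (π/2 * ((u - β)/(α - β)))).comp u h1
  have h3 := h2.pow 2
  exact h3.congr_deriv (by simp [dgFun])

lemma deriv_gFun (α β : ℝ) : deriv (gFun α β) = dgFun α β :=
  funext fun u => (hasDerivAt_gFun α β u).deriv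

lemma dgFun_left {α β : ℝ} (h : α ≠ β) : dgFun α β α = 0 := by
  have h' : (α - β)/(α - β) = 1 := div_self (sub_ne_zero.mpr h)
  simp [dgFun, h']

lemma dgFun_right (α β : ℝ) : dgFun α β β = 0 := by
  simp [dgFun]

lemma gFun_left {α β : ℝ} (h : α ≠ β) : gFun α β α = 0 := by
  have h' : (α - β)/(α - β) = 1 := div_self (sub_ne_zero.mpr h)
  simp [gFun, h']

lemma gFun_right (α β : ℝ) : gFun α β β = 1 := by
  simp [gFun]

lemma continuous_dgFun (α β : ℝ) : Continuous (dgFun α β) := by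
  unfold dgFun; fun_prop

lemma gFun_eq_one_sub_sin_sq (α β s : ℝ) :
    gFun α β s = 1 - Real.sin (π/2 * ((s - β)/(α - β))) ^ 2 := by
  rw [gFun, Real.cos_sq']

lemma clamp_of_le {a b s : ℝ} (hab : a ≤ b) (h : s ≤ a) : max a (min s b) = a := by
  rw [min_eq_left (h.trans hab), max_eq_left h]

lemma clamp_of_ge {a b s : ℝ} (hab : a ≤ b) (h : b ≤ s) : max a (min s b) = b := by
  rw [min_eq_right h, max_eq_right hab]

lemma clamp_of_mem {a b s : ℝ} (h1 : a ≤ s) (h2 : s ≤ b) : max a (min s b) = s := by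
  rw [min_eq_left h2, max_eq_right h1]

lemma hasDerivAt_comp_clamp {a b : ℝ} (hab : a < b) {g g' : ℝ → ℝ}
    (hg : ∀ u, HasDerivAt g (g' u) u) (ha : g' a = 0) (hb : g' b = 0) (s : ℝ) :
    HasDerivAt (fun u => g (max a (min u b))) (g' (max a (min s b))) s := by
  rcases lt_trichotomy s a with hs | rfl | hs
  · rw [clamp_of_le hab.le hs.le, ha]
    apply (hasDerivAt_const s (g a)).congr_of_eventuallyEq
    filter_upwards [Iio_mem_nhds hs] with u hu
    rw [clamp_of_le hab.le (le_of_lt hu)]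
  · rw [clamp_of_le hab.le le_rfl, ha]
    rw [← hasDerivWithinAt_univ, ← Set.Iic_union_Ici (a := s)]
    apply HasDerivWithinAt.union
    · apply (hasDerivWithinAt_const s (Iic s) (g s)).congr
      · intro u hu; rw [clamp_of_le hab.le hu]
      · rw [clamp_of_le hab.le le_rfl]
    · have h2 : HasDerivWithinAt g 0 (Ici s) s := by
        have := (hg s).hasDerivWithinAt (s := Ici s); rwa [ha] at this
      apply h2.congr_of_eventuallyEq ?_ (by rw [clamp_of_le hab.le le_rfl])
      filter_upwards [Ico_mem_nhdsGE_of_mem (Set.mem_Ico.mpr ⟨le_rfl, hab⟩)] with u hu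
      rw [clamp_of_mem hu.1 hu.2.le]
  · rcases lt_trichotomy s b with hsb | rfl | hsb
    · rw [clamp_of_mem hs.le hsb.le]
      apply (hg s).congr_of_eventuallyEq
      filter_upwards [Ioo_mem_nhds hs hsb] with u hu
      rw [clamp_of_mem hu.1.le hu.2.le]
    · rw [clamp_of_ge hab.le le_rfl, hb]
      rw [← hasDerivWithinAt_univ, ← Set.Iic_union_Ici (a := s)]
      apply HasDerivWithinAt.union
      · have h2 : HasDerivWithinAt g 0 (Iic s) s := by
          have := (hg s).hasDerivWithinAt (s := Iic s); rwa [hb] at this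
        apply h2.congr_of_eventuallyEq ?_ (by rw [clamp_of_ge hab.le le_rfl])
        filter_upwards [Ioc_mem_nhdsLE_of_mem (Set.mem_Ioc.mpr ⟨hab, le_rfl⟩)] with u hu
        rw [clamp_of_mem hu.1.le hu.2]
      · apply (hasDerivWithinAt_const s (Ici s) (g s)).congr
        · intro u hu; rw [clamp_of_ge hab.le hu]
        · rw [clamp_of_ge hab.le le_rfl]
    · rw [clamp_of_ge hab.le hsb.le, hb]
      apply (hasDerivAt_const s (g b)).congr_of_eventuallyEq
      filter_upwards [Ioi_mem_nhds hsb] with u hu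
      rw [clamp_of_ge hab.le (le_of_lt hu)]

lemma contDiff_comp_clamp {a b : ℝ} (hab : a < b) {g g' : ℝ → ℝ}
    (hg : ∀ u, HasDerivAt g (g' u) u) (hc : Continuous g') (ha : g' a = 0) (hb : g' b = 0) :
    ContDiff ℝ 1 (fun u => g (max a (min u b))) := by
  rw [contDiff_one_iff_deriv]
  refine ⟨fun s => (hasDerivAt_comp_clamp hab hg ha hb s).differentiableAt, ?_⟩
  have hder : deriv (fun u => g (max a (min u b))) = fun s => g' (max a (min s b)) :=
    funext fun s => (hasDerivAt_comp_clamp hab hg ha hb s).deriv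
  rw [hder]
  exact hc.comp (continuous_const.max (continuous_id.min continuous_const))

section Gmap

variable {X E : Type*} [NormedAddCommGroup X] [NormedSpace ℝ X]
  [NormedAddCommGroup E] [NormedSpace ℝ E]

noncomputable def Gmap (L : ℕ) (t : ℕ → ℝ) (F : ℕ → X → E) (x : X) (s : ℝ) : E :=
  F L x + ∑ j ∈ Finset.range L,
    gFun (t (j+1)) (t j) (max (t (j+1)) (min s (t j))) • (F j x - F (j+1) x)

noncomputable def DGmap (L : ℕ) (t : ℕ → ℝ) (F : ℕ → X → E) (x : X) (s : ℝ) : E :=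
  ∑ j ∈ Finset.range L,
    dgFun (t (j+1)) (t j) (max (t (j+1)) (min s (t j))) • (F j x - F (j+1) x)

lemma hasDerivAt_Gmap (L : ℕ) (t : ℕ → ℝ) (F : ℕ → X → E)
    (htmono : ∀ ℓ < L, t (ℓ + 1) < t ℓ) (x : X) (s : ℝ) :
    HasDerivAt (fun s => Gmap L t F x s) (DGmap L t F x s) s := by
  unfold Gmap DGmap
  refine HasDerivAt.const_add _ (HasDerivAt.fun_sum fun j hj => ?_)
  have hab : t (j+1) < t j := htmono j (Finset.mem_range.mp hj)
  exact (hasDerivAt_comp_clamp hab (hasDerivAt_gFun _ _)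
    (dgFun_left hab.ne) (dgFun_right _ _) s).smul_const _

lemma continuous_DGmap (L : ℕ) (t : ℕ → ℝ) (F : ℕ → X → E) (x : X) :
    Continuous (fun s => DGmap L t F x s) := by
  unfold DGmap
  refine continuous_finset_sum _ fun j hj => ?_
  exact ((continuous_dgFun _ _).comp
    (continuous_const.max (continuous_id.min continuous_const))).smul continuous_const

lemma contDiff_Gmap (L : ℕ) (t : ℕ → ℝ) (F : ℕ → X → E)
    (htmono : ∀ ℓ < L, t (ℓ + 1) < t ℓ) (hF : ∀ ℓ ≤ L, ContDiff ℝ 1 (F ℓ)) :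
    ContDiff ℝ 1 (fun p : X × ℝ => Gmap L t F p.1 p.2) := by
  unfold Gmap
  refine ((hF L le_rfl).comp contDiff_fst).add (ContDiff.sum fun j hj => ?_)
  have hjL := Finset.mem_range.mp hj
  have hab : t (j+1) < t j := htmono j hjL
  refine ContDiff.smul ?_ ?_
  · exact (contDiff_comp_clamp hab (hasDerivAt_gFun _ _) (continuous_dgFun _ _)
      (dgFun_left hab.ne) (dgFun_right _ _)).comp contDiff_snd
  · exact (((hF j (by omega)).comp contDiff_fst).sub
      ((hF (j+1) (by omega)).comp contDiff_fst))

end Gmap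

/-- d is C¹ on ℝⁿ × [0,1]; at each connection point t_ℓ (ℓ = 1,…,L−1) the
partial derivative of d with respect to t exists, is continuous, and equals 0. -/
theorem stmt_1
    (n N L : ℕ) (hn : 0 < n) (hN : 0 < N) (hL : 0 < L) (hLN : L ≤ N)
    (f : ℕ → EuclideanSpace ℝ (Fin n) → EuclideanSpace ℝ (Fin n))
    (hf : ∀ i < N, ContDiff ℝ 1 (f i))
    (q : ℕ → ℕ) (hq0 : q 0 = 0) (hqL : q L = N)
    (hqmono : ∀ ℓ < L, q ℓ < q (ℓ + 1))
    (F : ℕ → EuclideanSpace ℝ (Fin n) → EuclideanSpace ℝ (Fin n))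
    (hF0 : ∀ x, F 0 x = 0)
    (hF : ∀ ℓ, 1 ≤ ℓ → ℓ ≤ L → ∀ x,
      F ℓ x = (q ℓ : ℝ)⁻¹ • ∑ i ∈ Finset.range (q ℓ), f i x)
    (t : ℕ → ℝ) (ht0 : t 0 = 1) (htL : t L = 0)
    (htmono : ∀ ℓ < L, t (ℓ + 1) < t ℓ)
    (θ : ℕ → ℝ → ℝ)
    (hθ : ∀ ℓ s, θ ℓ s = Real.sin (π / 2 * ((s - t (ℓ - 1)) / (t ℓ - t (ℓ - 1)))) ^ 2)
    (d : EuclideanSpace ℝ (Fin n) → ℝ → EuclideanSpace ℝ (Fin n))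
    (hd : ∀ ℓ, 1 ≤ ℓ → ℓ ≤ L → ∀ s ∈ Icc (t ℓ) (t (ℓ - 1)), ∀ x,
      d x s = (1 - θ ℓ s) • F (ℓ - 1) x + θ ℓ s • F ℓ x)
    :
    ContDiffOn ℝ 1 (fun p : EuclideanSpace ℝ (Fin n) × ℝ => d p.1 p.2)
      (Set.univ ×ˢ Icc (0 : ℝ) 1) ∧
    ∀ ℓ, 1 ≤ ℓ → ℓ < L → ∀ x,
      HasDerivAt (fun s => d x s) 0 (t ℓ) ∧
      ContinuousAt (deriv (fun s => d x s)) (t ℓ) := by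
  have tstrict : ∀ i j : ℕ, i < j → j ≤ L → t j < t i := by
    intro i j hij hjL
    induction j with
    | zero => omega
    | succ m ih =>
      rcases Nat.lt_succ_iff_lt_or_eq.mp hij with h | rfl
      · exact (htmono m (by omega)).trans (ih h (by omega))
      · exact htmono i (by omega)
  have tle : ∀ i j : ℕ, i ≤ j → j ≤ L → t j ≤ t i := by
    intro i j hij hjL
    rcases eq_or_lt_of_le hij with rfl | h
    · exact le_rfl
    · exact (tstrict i j h hjL).le
  have qmono : ∀ i j : ℕ, i ≤ j → j ≤ L → q i ≤ q j := by
    intro i j hij hjL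
    induction j with
    | zero => exact le_of_eq (congrArg q (Nat.le_zero.mp hij))
    | succ m ih =>
      rcases Nat.lt_succ_iff_lt_or_eq.mp (Nat.lt_succ_of_le hij) with h | rfl
      · exact (ih (by omega) (by omega)).trans (hqmono m (by omega)).le
      · exact le_rfl
  have hqN : ∀ ℓ, ℓ ≤ L → q ℓ ≤ N := fun ℓ h => hqL ▸ qmono ℓ L h le_rfl
  have hFc : ∀ ℓ, ℓ ≤ L → ContDiff ℝ 1 (F ℓ) := by
    intro ℓ hℓ
    rcases Nat.eq_zero_or_pos ℓ with rfl | hpos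
    · have h0 : F 0 = fun _ => 0 := funext hF0
      rw [h0]; exact contDiff_const
    · have h0 : F ℓ = fun x => (q ℓ : ℝ)⁻¹ • ∑ i ∈ Finset.range (q ℓ), f i x :=
        funext (hF ℓ hpos hℓ)
      rw [h0]
      exact (ContDiff.sum fun i hi =>
        hf i (lt_of_lt_of_le (Finset.mem_range.mp hi) (hqN ℓ hℓ))).const_smul _
  have key : ∀ x : EuclideanSpace ℝ (Fin n), ∀ s ∈ Icc (0:ℝ) 1, d x s = Gmap L t F x s := by
    intro x s hs
    obtain ⟨k, hk1, hkL, hks1, hks2⟩ : ∃ k, 1 ≤ k ∧ k ≤ L ∧ t k ≤ s ∧ s ≤ t (k-1) := by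
      have main : ∀ m, m ≤ L → t m ≤ s → ∃ k, 1 ≤ k ∧ k ≤ L ∧ t k ≤ s ∧ s ≤ t (k-1) := by
        intro m
        induction m with
        | zero =>
          intro _ h0
          refine ⟨1, le_rfl, hL, le_trans (tle 0 1 (by omega) hL) h0, ?_⟩
          simpa [ht0] using hs.2
        | succ m ih =>
          intro hm hts
          by_cases h : t m ≤ s
          · exact ih (by omega) h
          · exact ⟨m+1, by omega, hm, hts, by simpa using (not_le.mp h).le⟩
      exact main L le_rfl (by rw [htL]; exact hs.1)
    obtain ⟨m, rfl⟩ : ∃ m, k = m + 1 := ⟨k - 1, by omega⟩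
    simp only [Nat.add_sub_cancel] at hks2
    rw [hd (m+1) hk1 hkL s (by simpa [Nat.add_sub_cancel] using Set.mem_Icc.mpr ⟨hks1, hks2⟩) x]
    unfold Gmap
    rw [← Finset.sum_range_add_sum_Ico _ hkL, Finset.sum_range_succ]
    have hIco : ∑ j ∈ Finset.Ico (m+1) L,
        gFun (t (j+1)) (t j) (max (t (j+1)) (min s (t j))) • (F j x - F (j+1) x)
        = F (m+1) x - F L x := by
      have e1 : ∀ j ∈ Finset.Ico (m+1) L,
          gFun (t (j+1)) (t j) (max (t (j+1)) (min s (t j))) • (F j x - F (j+1) x)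
          = F j x - F (j+1) x := by
        intro j hj
        obtain ⟨hj1, hj2⟩ := Finset.mem_Ico.mp hj
        have hab : t (j+1) ≤ t j := (htmono j hj2).le
        have h1 : t j ≤ s := le_trans (tle (m+1) j hj1 hj2.le) hks1
        rw [clamp_of_ge hab h1, gFun_right, one_smul]
      rw [Finset.sum_congr rfl e1, Finset.sum_Ico_eq_sum_range]
      have htel := Finset.sum_range_sub' (fun i => F (m+1+i) x) (L - (m+1))
      calc ∑ i ∈ Finset.range (L - (m+1)), (F (m+1+i) x - F (m+1+i+1) x)
          = F (m+1+0) x - F (m+1+(L-(m+1))) x := htel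
        _ = F (m+1) x - F L x := by rw [Nat.add_zero, Nat.add_sub_cancel' hkL]
    have hzero : ∑ j ∈ Finset.range m,
        gFun (t (j+1)) (t j) (max (t (j+1)) (min s (t j))) • (F j x - F (j+1) x) = 0 := by
      refine Finset.sum_eq_zero fun j hj => ?_
      have hjm := Finset.mem_range.mp hj
      have hab : t (j+1) < t j := htmono j (by omega)
      have h2 : s ≤ t (j+1) := le_trans hks2 (tle (j+1) m (by omega) (by omega))
      rw [clamp_of_le hab.le h2, gFun_left hab.ne, zero_smul]
    rw [hIco, hzero, clamp_of_mem hks1 hks2, gFun_eq_one_sub_sin_sq, hθ]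
    simp only [Nat.add_sub_cancel]
    module
  refine ⟨((contDiff_Gmap L t F htmono hFc).contDiffOn).congr
    (fun p hp => key p.1 p.2 hp.2), ?_⟩
  intro ℓ h1 hℓL x
  have hℓ0 : 0 < t ℓ := by rw [← htL]; exact tstrict ℓ L hℓL le_rfl
  have hℓ1 : t ℓ < 1 := by rw [← ht0]; exact tstrict 0 ℓ h1 hℓL.le
  have hev : (fun s => d x s) =ᶠ[𝓝 (t ℓ)] (fun s => Gmap L t F x s) := by
    filter_upwards [Ioo_mem_nhds hℓ0 hℓ1] with u hu
    exact key x u ⟨hu.1.le, hu.2.le⟩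
  have hDzero : DGmap L t F x (t ℓ) = 0 := by
    unfold DGmap
    refine Finset.sum_eq_zero fun j hj => ?_
    have hjL := Finset.mem_range.mp hj
    have hab : t (j+1) < t j := htmono j hjL
    rcases le_or_gt (j+1) ℓ with h | h
    · rw [clamp_of_le hab.le (tle (j+1) ℓ h hℓL.le), dgFun_left hab.ne, zero_smul]
    · have hℓj : ℓ ≤ j := by omega
      rw [clamp_of_ge hab.le (tle ℓ j hℓj hjL.le), dgFun_right, zero_smul]
  refine ⟨?_, ?_⟩
  · have hG := hasDerivAt_Gmap L t F htmono x (t ℓ)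
    rw [hDzero] at hG
    exact hG.congr_of_eventuallyEq hev
  · have hderiv : deriv (fun s => d x s) =ᶠ[𝓝 (t ℓ)] deriv (fun s => Gmap L t F x s) :=
      hev.deriv
    have hGd : deriv (fun s => Gmap L t F x s) = fun s => DGmap L t F x s :=
      funext fun s => (hasDerivAt_Gmap L t F htmono x s).deriv
    have hc : ContinuousAt (deriv (fun s => Gmap L t F x s)) (t ℓ) := by
      rw [hGd]; exact (continuous_DGmap L t F x).continuousAt
    exact hc.congr hderiv.symm
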